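/- Suppose F is holomorphic in a neighborhood of 0 in ℂ, odd, with F(0) = 0, and satisfies F'(z) + 2θ(z)F(z) + F(z)² + μ = 0 on a punctured neighborhood of 0, where θ(z) = (1/2)coth(z/2) and μ is a complex constant. Write μ = 1/4 − ν² for some ν ∈ ℂ. Then on a punctured neighborhood of 0, F(z) + θ(z) = ν·coth(νz) if ν ≠ 0, and F(z) + θ(z) = 1/z if ν = 0. -/

import Mathlib

open Complex Filter Topology

noncomputable def coth (z : ℂ) : ℂ := Complex.cosh z / Complex.sinh z

noncomputable def theta (z : ℂ) : ℂ := (1 / 2 : ℂ) * coth (z / 2)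

/- ## Auxiliary: the entire function `gsh z = sinh z / z` -/

noncomputable def gsh : ℂ → ℂ := dslope Complex.sinh 0

lemma analyticAt_dslope_zero {f : ℂ → ℂ} (hf : AnalyticAt ℂ f 0) :
    AnalyticAt ℂ (dslope f 0) 0 := by
  obtain ⟨p, hp⟩ := hf
  exact hp.has_fpower_series_dslope_fslope.analyticAt

lemma gsh_analytic : AnalyticAt ℂ gsh 0 :=
  analyticAt_dslope_zero (Complex.differentiable_sinh.analyticAt 0)

lemma sinh_eq_gsh (z : ℂ) : Complex.sinh z = z * gsh z := by
  rcases eq_or_ne z 0 with rfl | hz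
  · simp
  · rw [gsh, dslope_of_ne _ hz, slope_def_field]
    field_simp
    simp only [sub_zero, Complex.sinh_zero]; ring

lemma gsh_zero : gsh 0 = 1 := by
  simp [gsh, dslope_same, Complex.deriv_sinh]

lemma gsh_even (z : ℂ) : gsh (-z) = gsh z := by
  rcases eq_or_ne z 0 with rfl | hz
  · simp
  · have h1 := sinh_eq_gsh (-z)
    have h2 := sinh_eq_gsh z
    rw [Complex.sinh_neg, h2] at h1
    field_simp at h1
    exact (neg_inj.mp h1).symm

lemma continuous_gsh : Continuous gsh := by
  rw [continuous_iff_continuousAt]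
  intro z
  rcases eq_or_ne z 0 with rfl | hz
  · exact gsh_analytic.continuousAt
  · have hev : ∀ᶠ w in 𝓝 z, Complex.sinh w / w = gsh w := by
      filter_upwards [isOpen_compl_singleton.eventually_mem
        (Set.mem_compl_singleton_iff.mpr hz)] with w hw
      rw [sinh_eq_gsh w]
      field_simp [Set.mem_compl_singleton_iff.mp hw]
    exact (Complex.continuous_sinh.continuousAt.div continuousAt_id hz).congr hev

lemma sinh_ne_zero_gsh {z : ℂ} (hz : z ≠ 0) (hg : gsh z ≠ 0) : Complex.sinh z ≠ 0 := by
  rw [sinh_eq_gsh]; exact mul_ne_zero hz hg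

/- ## theta basics -/

lemma theta_eq {z : ℂ} (hz : z ≠ 0) (hg : gsh (z/2) ≠ 0) :
    theta z = Complex.cosh (z/2) / (z * gsh (z/2)) := by
  have hs := sinh_eq_gsh (z/2)
  rw [theta, coth, hs]
  field_simp

lemma hasDerivAt_theta {z : ℂ} (hs : Complex.sinh (z/2) ≠ 0) :
    HasDerivAt theta (1/4 - theta z^2) z := by
  have h2 : HasDerivAt (fun w : ℂ => w/2) (1/2) z := (hasDerivAt_id z).div_const 2
  have hc : HasDerivAt (fun w => Complex.cosh (w/2)) (Complex.sinh (z/2) * (1/2)) z :=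
    by have := HasDerivAt.comp z (Complex.hasDerivAt_cosh (z/2)) h2; exact this
  have hsd : HasDerivAt (fun w => Complex.sinh (w/2)) (Complex.cosh (z/2) * (1/2)) z :=
    by have := HasDerivAt.comp z (Complex.hasDerivAt_sinh (z/2)) h2; exact this
  have hdiv := (hc.div hsd hs).const_mul (1/2 : ℂ)
  have hval : (1/2 : ℂ) * ((Complex.sinh (z/2) * (1/2) * Complex.sinh (z/2)
      - Complex.cosh (z/2) * (Complex.cosh (z/2) * (1/2))) / Complex.sinh (z/2)^2)
      = 1/4 - theta z^2 := by
    have hid := Complex.cosh_sq_sub_sinh_sq (z/2)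
    rw [theta, coth]
    field_simp
    ring
  rw [hval] at hdiv
  exact hdiv

/- ## the target function `Gt` and its derivative -/

lemma hasDerivAt_Gt (ν : ℂ) {z : ℂ} (hz : z ≠ 0) (hg : gsh (ν*z) ≠ 0) :
    HasDerivAt (fun w => Complex.cosh (ν*w) / (w * gsh (ν*w)))
      (ν^2 - (Complex.cosh (ν*z) / (z * gsh (ν*z)))^2) z := by
  rcases eq_or_ne ν 0 with rfl | hν
  · simp only [zero_mul, Complex.cosh_zero, gsh_zero, mul_one, zero_pow, ne_eq,
      OfNat.ofNat_ne_zero, not_false_eq_true, zero_sub]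
    have := (hasDerivAt_inv hz)
    have h1 : HasDerivAt (fun w : ℂ => 1 / w) (-(1/z)^2) z := by
      simpa [one_div, div_pow] using this
    convert h1 using 1
  · have hνz : ν * z ≠ 0 := mul_ne_zero hν hz
    have hsν : Complex.sinh (ν*z) ≠ 0 := sinh_ne_zero_gsh hνz hg
    -- derivative of ν * coth (ν w)
    have hm : HasDerivAt (fun w : ℂ => ν*w) ν z := by
      simpa using (hasDerivAt_id z).const_mul ν
    have hc : HasDerivAt (fun w => Complex.cosh (ν*w)) (Complex.sinh (ν*z) * ν) z :=
      HasDerivAt.comp z (Complex.hasDerivAt_cosh (ν*z)) hm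
    have hsd : HasDerivAt (fun w => Complex.sinh (ν*w)) (Complex.cosh (ν*z) * ν) z :=
      HasDerivAt.comp z (Complex.hasDerivAt_sinh (ν*z)) hm
    have hdiv := ((hc.div hsd hsν).const_mul ν :
      HasDerivAt (fun w => ν * (Complex.cosh (ν*w) / Complex.sinh (ν*w)))
        (ν * ((Complex.sinh (ν*z) * ν * Complex.sinh (ν*z)
          - Complex.cosh (ν*z) * (Complex.cosh (ν*z) * ν)) / Complex.sinh (ν*z)^2)) z)
    have hev : (fun w => ν * (Complex.cosh (ν*w) / Complex.sinh (ν*w)))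
        =ᶠ[𝓝 z] fun w => Complex.cosh (ν*w) / (w * gsh (ν*w)) := by
      filter_upwards [isOpen_compl_singleton.eventually_mem
          (Set.mem_compl_singleton_iff.mpr hz),
        ((continuous_gsh.comp (continuous_const.mul continuous_id)).continuousAt).eventually_ne hg]
        with w hw hgw
      have hw0 : w ≠ 0 := Set.mem_compl_singleton_iff.mp hw
      simp only [Function.comp, id_eq] at hgw
      rw [sinh_eq_gsh (ν*w)]
      field_simp
    have hfin := hdiv.congr_of_eventuallyEq hev.symm
    have hval : ν * ((Complex.sinh (ν*z) * ν * Complex.sinh (ν*z)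
          - Complex.cosh (ν*z) * (Complex.cosh (ν*z) * ν)) / Complex.sinh (ν*z)^2)
        = ν^2 - (Complex.cosh (ν*z) / (z * gsh (ν*z)))^2 := by
      have hs := sinh_eq_gsh (ν*z)
      have hzg : z * gsh (ν*z) = Complex.sinh (ν*z) / ν := by
        rw [hs]; field_simp
      rw [hzg]
      field_simp
    rw [hval] at hfin
    exact hfin

/- ## composition analyticity helpers -/

lemma analyticAt_half : AnalyticAt ℂ (fun z : ℂ => z/2) 0 :=
  analyticAt_id.div analyticAt_const two_ne_zero

lemma analyticAt_lin (c : ℂ) : AnalyticAt ℂ (fun z : ℂ => c*z) 0 :=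
  analyticAt_const.mul analyticAt_id

lemma gsh_half_analytic : AnalyticAt ℂ (fun z : ℂ => gsh (z/2)) 0 := by
  have h : AnalyticAt ℂ gsh ((fun z : ℂ => z/2) 0) := by simpa using gsh_analytic
  simpa [Function.comp_def] using AnalyticAt.comp (f := fun z : ℂ => z/2) (x := 0) h analyticAt_half

lemma gsh_lin_analytic (c : ℂ) : AnalyticAt ℂ (fun z : ℂ => gsh (c*z)) 0 := by
  have h : AnalyticAt ℂ gsh ((fun z : ℂ => c*z) 0) := by simpa using gsh_analytic
  simpa [Function.comp_def] using AnalyticAt.comp (f := fun z : ℂ => c*z) (x := 0) h (analyticAt_lin c)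

lemma cosh_half_analytic : AnalyticAt ℂ (fun z : ℂ => Complex.cosh (z/2)) 0 := by
  have h : AnalyticAt ℂ Complex.cosh ((fun z : ℂ => z/2) 0) :=
    Complex.differentiable_cosh.analyticAt _
  simpa [Function.comp_def] using AnalyticAt.comp (f := fun z : ℂ => z/2) (x := 0) h analyticAt_half

lemma cosh_lin_analytic (c : ℂ) : AnalyticAt ℂ (fun z : ℂ => Complex.cosh (c*z)) 0 := by
  have h : AnalyticAt ℂ Complex.cosh ((fun z : ℂ => c*z) 0) :=
    Complex.differentiable_cosh.analyticAt _
  simpa [Function.comp_def] using AnalyticAt.comp (f := fun z : ℂ => c*z) (x := 0) h (analyticAt_lin c)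

/- ## even functions have vanishing derivative at 0 -/

lemma deriv_even_zero {f : ℂ → ℂ} (hf : DifferentiableAt ℂ f 0) (he : ∀ z, f (-z) = f z) :
    deriv f 0 = 0 := by
  have h1 : HasDerivAt f (deriv f 0) 0 := hf.hasDerivAt
  have h2 : HasDerivAt (fun z => f (-z)) (deriv f 0 * (-1)) 0 := by
    have hn : HasDerivAt (fun z : ℂ => -z) (-1) 0 := hasDerivAt_neg 0
    have h1' : HasDerivAt f (deriv f 0) ((fun z : ℂ => -z) 0) := by simpa using h1
    simpa [Function.comp_def] using HasDerivAt.comp 0 h1' hn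
  rw [funext he] at h2
  have h3 := h1.unique h2
  have h4 : (2:ℂ) * deriv f 0 = 0 := by linear_combination h3
  simpa using h4

/- ## the functions N, R, k, tau -/

noncomputable def Ncal (ν : ℂ) : ℂ → ℂ :=
  fun z => Complex.cosh (ν*z) * gsh (z/2) - Complex.cosh (z/2) * gsh (ν*z)

noncomputable def Rcal (ν : ℂ) : ℂ → ℂ :=
  fun z => dslope (Ncal ν) 0 z / (gsh (ν*z) * gsh (z/2))

noncomputable def kfun : ℂ → ℂ := fun z => Complex.cosh (z/2) - gsh (z/2)

noncomputable def tau : ℂ → ℂ := fun z => 2 * dslope kfun 0 z / gsh (z/2)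

lemma Ncal_analytic (ν : ℂ) : AnalyticAt ℂ (Ncal ν) 0 :=
  ((cosh_lin_analytic ν).mul gsh_half_analytic).sub
    (cosh_half_analytic.mul (gsh_lin_analytic ν))

lemma Ncal_zero (ν : ℂ) : Ncal ν 0 = 0 := by simp [Ncal]

lemma Ncal_even (ν z : ℂ) : Ncal ν (-z) = Ncal ν z := by
  simp [Ncal, mul_neg, neg_div, Complex.cosh_neg, gsh_even]

lemma deriv_Ncal_zero (ν : ℂ) : deriv (Ncal ν) 0 = 0 :=
  deriv_even_zero (Ncal_analytic ν).differentiableAt (Ncal_even ν)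

lemma Rcal_analytic (ν : ℂ) : AnalyticAt ℂ (Rcal ν) 0 :=
  (analyticAt_dslope_zero (Ncal_analytic ν)).div
    ((gsh_lin_analytic ν).mul gsh_half_analytic) (by simp [gsh_zero])

lemma Rcal_zero (ν : ℂ) : Rcal ν 0 = 0 := by
  simp [Rcal, dslope_same, deriv_Ncal_zero]

lemma Rcal_eq (ν : ℂ) {z : ℂ} (hz : z ≠ 0) (h2 : gsh (z/2) ≠ 0) (hν : gsh (ν*z) ≠ 0) :
    Rcal ν z = Complex.cosh (ν*z) / (z * gsh (ν*z)) - theta z := by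
  rw [theta_eq hz h2, Rcal]
  have hd : dslope (Ncal ν) 0 z = Ncal ν z / z := by
    rw [dslope_of_ne _ hz, slope_def_field, Ncal_zero, sub_zero, sub_zero]
  rw [hd, Ncal]
  field_simp

lemma kfun_analytic : AnalyticAt ℂ kfun 0 := cosh_half_analytic.sub gsh_half_analytic

lemma kfun_zero : kfun 0 = 0 := by simp [kfun, gsh_zero]

lemma tau_analytic : AnalyticAt ℂ tau 0 :=
  (analyticAt_const.mul (analyticAt_dslope_zero kfun_analytic)).div
    gsh_half_analytic (by simp [gsh_zero])

lemma tau_eq {z : ℂ} (hz : z ≠ 0) (h2 : gsh (z/2) ≠ 0) :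
    tau z = 2 * theta z - 2/z := by
  rw [theta_eq hz h2, tau]
  have hd : dslope kfun 0 z = kfun z / z := by
    rw [dslope_of_ne _ hz, slope_def_field, kfun_zero, sub_zero, sub_zero]
  rw [hd, kfun]
  field_simp

/- ## extraction of δ from a punctured-neighborhood statement -/

lemma extract_delta {p : ℂ → Prop} (h : ∀ᶠ z in 𝓝[≠] (0:ℂ), p z) :
    ∃ δ > 0, ∀ z : ℂ, 0 < ‖z‖ → ‖z‖ < δ → p z := by
  rw [eventually_nhdsWithin_iff, Metric.eventually_nhds_iff] at h
  obtain ⟨δ, hδ, H⟩ := h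
  refine ⟨δ, hδ, fun z h1 h2 => H ?_ ?_⟩
  · simpa [Complex.dist_eq] using h2
  · exact Set.mem_compl_singleton_iff.mpr (by
      intro h'
      rw [h'] at h1
      simp at h1)
lemma core_unique (D ψ : ℂ → ℂ) (hD : AnalyticAt ℂ D 0) (hD0 : D 0 = 0)
    (hψ : ContinuousAt ψ 0)
    (hode : ∀ᶠ z in 𝓝[≠] (0:ℂ), HasDerivAt D (-((2/z + ψ z) * D z)) z) :
    ∀ᶠ z in 𝓝 (0:ℂ), D z = 0 := by
  rw [← analyticOrderAt_eq_top]
  by_contra hne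
  obtain ⟨n, hn⟩ : ∃ n : ℕ, analyticOrderAt D 0 = n := by
    cases h : analyticOrderAt D 0 with
    | top => exact absurd h hne
    | coe n => exact ⟨n, rfl⟩
  obtain ⟨g, hg, hg0, hDg⟩ := hD.analyticOrderAt_eq_natCast.mp hn
  simp only [sub_zero, smul_eq_mul] at hDg
  have hgd : AnalyticAt ℂ (deriv g) 0 := by
    obtain ⟨s, hs, hgs⟩ := hg.eventually_analyticAt.exists_mem
    exact AnalyticOnNhd.deriv (fun y hy => hgs y hy) 0 (mem_of_mem_nhds hs)
  rcases n with _ | m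
  · have := hDg.self_of_nhds
    simp [hD0] at this
    exact hg0 this.symm
  set φ : ℂ → ℂ := fun w => ((m : ℂ) + 3) * g w + w * deriv g w + w * ψ w * g w with hφ
  have hφcont : ContinuousAt φ 0 :=
    ((continuousAt_const.mul hg.continuousAt).add
      (continuousAt_id.mul hgd.continuousAt)).add
      ((continuousAt_id.mul hψ).mul hg.continuousAt)
  have hφ0 : φ 0 = ((m : ℂ) + 3) * g 0 := by simp [hφ]
  have hev : ∀ᶠ z in 𝓝[≠] (0:ℂ), φ z = 0 := by
    filter_upwards [hode, eventually_nhdsWithin_of_eventually_nhds hDg.eventually_nhds,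
      eventually_nhdsWithin_of_eventually_nhds hg.eventually_analyticAt,
      self_mem_nhdsWithin] with z hz1 hz2 hz3 (hz : z ≠ 0)
    have hg' : HasDerivAt g (deriv g z) z := hz3.differentiableAt.hasDerivAt
    have hpow : HasDerivAt (fun w => w ^ (m+1) * g w)
        ((↑(m+1) * z ^ m) * g z + z ^ (m+1) * deriv g z) z :=
      (hasDerivAt_pow (m+1) z).mul hg'
    have hEq : (fun w => D w) =ᶠ[𝓝 z] fun w => w ^ (m+1) * g w := hz2
    have hD' : HasDerivAt D ((↑(m+1) * z ^ m) * g z + z ^ (m+1) * deriv g z) z :=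
      hpow.congr_of_eventuallyEq hEq
    have hu := hz1.unique hD'
    have hDz : D z = z ^ (m+1) * g z := hEq.self_of_nhds
    rw [hDz] at hu
    have hzm : z ^ (m+1) ≠ 0 := pow_ne_zero _ hz
    have key : z ^ (m+1) * φ z = 0 := by
      field_simp at hu
      push_cast at hu ⊢
      simp only [hφ]
      linear_combination -hu
    exact (mul_eq_zero.mp key).resolve_left hzm
  have ht : Tendsto φ (𝓝[≠] (0:ℂ)) (𝓝 (φ 0)) := hφcont.continuousWithinAt.tendsto
  have h0 : φ 0 = 0 :=
    tendsto_nhds_unique ht (Tendsto.congr' (by filter_upwards [hev] with z h using h.symm)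
      tendsto_const_nhds)
  rw [hφ0] at h0
  rcases mul_eq_zero.mp h0 with h | h
  · have h3 : ((m:ℂ) + 3) ≠ 0 := by
      have h4 : ((m + 3 : ℕ) : ℂ) ≠ 0 := Nat.cast_ne_zero.mpr (by omega)
      push_cast at h4; exact h4
    exact h3 h
  · exact hg0 h

/-- Uniqueness: an odd holomorphic F near 0 with F(0) = 0 solving
F' + 2θF + F² + μ = 0 satisfies F + θ = ν·coth(νz) (or 1/z if ν = 0),
where μ = 1/4 − ν². -/
theorem stmt9 (F : ℂ → ℂ) (μ ν : ℂ) (hμν : μ = 1 / 4 - ν ^ 2) (ε : ℝ) (hε : 0 < ε)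
    (hdiff : ∀ z : ℂ, ‖z‖ < ε → DifferentiableAt ℂ F z)
    (hodd : ∀ z : ℂ, F (-z) = -F z) (h0 : F 0 = 0)
    (heq : ∀ z : ℂ, 0 < ‖z‖ → ‖z‖ < ε →
      HasDerivAt F (-(2 * theta z * F z + F z ^ 2 + μ)) z) :
    (ν ≠ 0 → ∃ δ > 0, ∀ z : ℂ, 0 < ‖z‖ → ‖z‖ < δ →
        F z + theta z = ν * coth (ν * z)) ∧
    (ν = 0 → ∃ δ > 0, ∀ z : ℂ, 0 < ‖z‖ → ‖z‖ < δ →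
        F z + theta z = 1 / z) := by
  have hFan : AnalyticAt ℂ F 0 := by
    apply DifferentiableOn.analyticAt (s := Metric.ball 0 ε)
    · intro z hz
      exact (hdiff z (by simpa [Complex.dist_eq] using hz)).differentiableWithinAt
    · exact Metric.ball_mem_nhds 0 hε
  have hRan := Rcal_analytic ν
  set D : ℂ → ℂ := fun z => F z - Rcal ν z with hDdef
  set ψ : ℂ → ℂ := fun z => tau z + F z + Rcal ν z with hψdef
  have hDan : AnalyticAt ℂ D 0 := hFan.sub hRan
  have hD0 : D 0 = 0 := by simp [hDdef, h0, Rcal_zero]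
  have hψc : ContinuousAt ψ 0 :=
    ((tau_analytic.continuousAt).add (hdiff 0 (by simpa using hε)).continuousAt).add
      hRan.continuousAt
  have hg2 : ∀ᶠ z in 𝓝 (0:ℂ), gsh (z/2) ≠ 0 := by
    have hcont : ContinuousAt (fun z : ℂ => gsh (z/2)) 0 :=
      (continuous_gsh.comp (continuous_id.div_const 2)).continuousAt
    exact hcont.eventually_ne (by simp [gsh_zero])
  have hgν : ∀ᶠ z in 𝓝 (0:ℂ), gsh (ν*z) ≠ 0 := by
    have hcont : ContinuousAt (fun z : ℂ => gsh (ν*z)) 0 :=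
      (continuous_gsh.comp (continuous_const.mul continuous_id)).continuousAt
    exact hcont.eventually_ne (by simp [gsh_zero])
  have hεev : ∀ᶠ z in 𝓝 (0:ℂ), ‖z‖ < ε := by
    filter_upwards [Metric.ball_mem_nhds (0:ℂ) hε] with z hz
    simpa [Complex.dist_eq] using hz
  have hU : ∀ᶠ z in 𝓝[≠] (0:ℂ), z ≠ 0 ∧ gsh (z/2) ≠ 0 ∧ gsh (ν*z) ≠ 0 := by
    filter_upwards [eventually_nhdsWithin_of_eventually_nhds hg2,
      eventually_nhdsWithin_of_eventually_nhds hgν, self_mem_nhdsWithin] with z h1 h2 h3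
    exact ⟨h3, h1, h2⟩
  have hode : ∀ᶠ z in 𝓝[≠] (0:ℂ), HasDerivAt D (-((2/z + ψ z) * D z)) z := by
    filter_upwards [hU, eventually_nhdsWithin_of_eventually_nhds hεev] with z hz hzε
    obtain ⟨hz0, hz2, hzν⟩ := hz
    have hRev : Rcal ν =ᶠ[𝓝 z] fun w => Complex.cosh (ν*w) / (w * gsh (ν*w)) - theta w := by
      have hc2 : ContinuousAt (fun w : ℂ => gsh (w/2)) z :=
        (continuous_gsh.comp (continuous_id.div_const 2)).continuousAt
      have hcν : ContinuousAt (fun w : ℂ => gsh (ν*w)) z :=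
        (continuous_gsh.comp (continuous_const.mul continuous_id)).continuousAt
      filter_upwards [isOpen_compl_singleton.eventually_mem
          (Set.mem_compl_singleton_iff.mpr hz0),
        hc2.eventually_ne hz2, hcν.eventually_ne hzν] with w hw0 hw2 hwν
      exact Rcal_eq ν (Set.mem_compl_singleton_iff.mp hw0) hw2 hwν
    have hsz : Complex.sinh (z/2) ≠ 0 :=
      sinh_ne_zero_gsh (div_ne_zero hz0 two_ne_zero) hz2
    have hRd : HasDerivAt (Rcal ν)
        (ν^2 - (Complex.cosh (ν*z)/(z*gsh (ν*z)))^2 - (1/4 - theta z^2)) z :=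
      HasDerivAt.congr_of_eventuallyEq
        ((hasDerivAt_Gt ν hz0 hzν).sub (hasDerivAt_theta hsz)) hRev
    have hFd := heq z (by simpa [norm_pos_iff] using hz0) hzε
    have hD' := hFd.sub hRd
    have hτ : tau z = 2 * theta z - 2/z := tau_eq hz0 hz2
    have hRz : Rcal ν z = Complex.cosh (ν*z)/(z*gsh (ν*z)) - theta z := Rcal_eq ν hz0 hz2 hzν
    have hval : -(2 * theta z * F z + F z ^ 2 + μ)
        - (ν^2 - (Complex.cosh (ν*z)/(z*gsh (ν*z)))^2 - (1/4 - theta z^2))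
        = -((2/z + ψ z) * D z) := by
      simp only [hψdef, hDdef, hμν]
      rw [hτ, hRz]
      have hcol : (2:ℂ)/z + (2 * theta z - 2/z + F z
          + (Complex.cosh (ν*z)/(z*gsh (ν*z)) - theta z))
          = theta z + F z + Complex.cosh (ν*z)/(z*gsh (ν*z)) := by ring
      rw [hcol]
      ring
    rw [hval] at hD'
    exact hD'
  have hDev := core_unique D ψ hDan hD0 hψc hode
  have hFG : ∀ᶠ z in 𝓝[≠] (0:ℂ), F z + theta z = Complex.cosh (ν*z) / (z * gsh (ν*z)) := by
    filter_upwards [hU, eventually_nhdsWithin_of_eventually_nhds hDev] with z hz hDz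
    obtain ⟨hz0, hz2, hzν⟩ := hz
    have hFz : F z = Rcal ν z := sub_eq_zero.mp hDz
    rw [hFz, Rcal_eq ν hz0 hz2 hzν]
    ring
  constructor
  · intro hν
    apply extract_delta
    filter_upwards [hFG, hU] with z hz h2
    obtain ⟨hz0, hz2, hzν⟩ := h2
    rw [hz, coth, sinh_eq_gsh (ν*z)]
    field_simp
  · intro hν
    apply extract_delta
    filter_upwards [hFG] with z hz
    rw [hz, hν]
    simp [gsh_zero]
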